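/- Let K be a field containing a primitive n-th root of unity ζ, T a nonempty finite subset of ZMod n, and d a positive divisor of n whose image in ZMod n satisfies d + T = T. Then the number of nonzero coefficients of the polynomial f_T = ∏_{γ ∈ T}(X − ζ^{γ̃}) is at most |T|·d/n + 1 (note that n/d divides |T|, so |T|·d/n is a natural number). -/
import Mathlib
open Polynomial

theorem coeff_comp_C_mul_X' {R : Type*} [CommRing R] (p : R[X]) (a : R) (k : ℕ) :
    (p.comp (C a * X)).coeff k = a ^ k * p.coeff k := by
  induction p using Polynomial.induction_on' with
  | add p q hp hq => simp [add_comp, hp, hq, mul_add]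
  | monomial i c =>
    rw [monomial_comp, mul_pow, ← C_pow, ← mul_assoc, mul_comm (C c), mul_assoc,
      coeff_C_mul, coeff_C_mul, coeff_X_pow, coeff_monomial]
    split
    · subst ‹_›; rw [if_pos rfl]; ring
    · rw [if_neg (by omega)]; ring

/-- If `d` is a positive divisor of `n` whose image in `ZMod n` stabilizes the
nonempty finite subset `T`, then the polynomial `f_T = ∏_{γ ∈ T}(X - ζ^γ̃)` has at most
`|T|·d/n + 1` nonzero coefficients. -/
theorem support_card_le_of_stabilized {K : Type*} [Field K]
    (n : ℕ) (hn : 0 < n) (ζ : K) (hζ : IsPrimitiveRoot ζ n)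
    (T : Finset (ZMod n)) (hT : T.Nonempty)
    (d : ℕ) (hd : 0 < d) (hdn : d ∣ n)
    (hstab : (((d : ZMod n)) + ·) '' (T : Set (ZMod n)) = (T : Set (ZMod n))) :
    (∏ γ ∈ T, (X - C (ζ ^ γ.val))).support.card ≤ T.card * d / n + 1 := by
  haveI : NeZero n := ⟨hn.ne'⟩
  obtain ⟨m, hm⟩ := hdn
  have hmpos : 0 < m := by
    rcases Nat.eq_zero_or_pos m with h | h
    · simp [h] at hm; omega
    · exact h
  set P : K[X] := ∏ γ ∈ T, (X - C (ζ ^ γ.val)) with hP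
  -- power reduction helper
  have hred : ∀ i : ℕ, ζ ^ i = ζ ^ (i % n) := by
    intro i
    conv_lhs => rw [← Nat.div_add_mod i n]
    rw [pow_add, pow_mul, hζ.pow_eq_one, one_pow, one_mul]
  have hpow : ∀ i j : ℕ, i % n = j % n → ζ ^ i = ζ ^ j := by
    intro i j hij
    rw [hred i, hred j, hij]
  have hadd : ∀ a b : ZMod n, ζ ^ (a + b).val = ζ ^ a.val * ζ ^ b.val := by
    intro a b
    rw [← pow_add]
    apply hpow
    rw [ZMod.val_add, Nat.mod_mod_of_dvd _ dvd_rfl]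
  have hdval : ζ ^ ((d : ZMod n)).val = ζ ^ d := by
    apply hpow
    rw [ZMod.val_natCast, Nat.mod_mod_of_dvd _ dvd_rfl]
  have hu : ∀ a : ZMod n, ζ ^ d * ζ ^ (a - (d : ZMod n)).val = ζ ^ a.val := by
    intro a
    rw [← hdval, mul_comm, ← hadd, sub_add_cancel]
  -- image of T under subtraction of d
  have himg : T.image (fun γ => γ - (d : ZMod n)) = T := by
    apply Finset.coe_injective
    rw [Finset.coe_image]
    conv_lhs => rw [← hstab]
    rw [← Set.image_comp]
    simp [Function.comp_def]
  -- functional equation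
  have hfe : P.comp (C (ζ ^ d) * X) = C ((ζ ^ d) ^ T.card) * P := by
    rw [hP, prod_comp]
    have h1 : ∀ γ ∈ T, (X - C (ζ ^ γ.val)).comp (C (ζ ^ d) * X)
        = C (ζ ^ d) * (X - C (ζ ^ (γ - (d : ZMod n)).val)) := by
      intro γ _
      rw [sub_comp, X_comp, C_comp, mul_sub, ← C_mul, hu]
    rw [Finset.prod_congr rfl h1, Finset.prod_mul_distrib, Finset.prod_const, ← C_pow]
    congr 1
    conv_rhs => rw [← himg]
    rw [Finset.prod_image]
    intro a _ b _ hab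
    exact sub_left_injective hab
  -- degree
  have hdeg : P.natDegree = T.card := by
    rw [hP, natDegree_prod _ _ (fun γ _ => X_sub_C_ne_zero _)]
    rw [Finset.sum_congr rfl fun γ _ => natDegree_X_sub_C (ζ ^ γ.val)]
    simp
  -- support elements are ≡ T.card mod m and ≤ T.card
  have hkey : ∀ k ∈ P.support, k ≤ T.card ∧ k % m = T.card % m := by
    intro k hk
    have hco : P.coeff k ≠ 0 := mem_support_iff.mp hk
    have hkle : k ≤ T.card := hdeg ▸ le_natDegree_of_mem_supp k hk
    refine ⟨hkle, ?_⟩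
    have h2 := congrArg (fun q => q.coeff k) hfe
    simp only [coeff_comp_C_mul_X', coeff_C_mul] at h2
    have heq : (ζ ^ d) ^ k = (ζ ^ d) ^ T.card := mul_right_cancel₀ hco h2
    rw [← pow_mul, ← pow_mul, hred (d * k), hred (d * T.card)] at heq
    have hmod : d * k % n = d * T.card % n :=
      hζ.pow_inj (Nat.mod_lt _ hn) (Nat.mod_lt _ hn) heq
    have h3 : d * k % (d * m) = d * T.card % (d * m) := by rw [← hm]; exact hmod
    rw [Nat.mul_mod_mul_left, Nat.mul_mod_mul_left] at h3
    exact Nat.eq_of_mul_eq_mul_left hd h3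
  -- counting
  have hsub : P.support ⊆
      Finset.image (fun j => T.card - j * m) (Finset.range (T.card / m + 1)) := by
    intro k hk
    obtain ⟨hkle, hkmod⟩ := hkey k hk
    have hdvd : m ∣ T.card - k :=
      (Nat.modEq_iff_dvd' hkle).mp hkmod
    obtain ⟨j, hj⟩ := hdvd
    have hj' : j * m = T.card - k := by rw [mul_comm]; omega
    refine Finset.mem_image.mpr ⟨j, Finset.mem_range.mpr ?_, by omega⟩
    have hle : j * m ≤ T.card := by omega
    have := (Nat.le_div_iff_mul_le hmpos).mpr hle
    omega
  have hdiv : T.card * d / n = T.card / m := by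
    have h1 : T.card * d / n = T.card * d / (d * m) := congrArg (T.card * d / ·) hm
    rw [h1, mul_comm d m, Nat.mul_div_mul_right _ _ hd]
  calc P.support.card ≤ _ := Finset.card_le_card hsub
    _ ≤ T.card / m + 1 := (Finset.card_image_le).trans (by simp)
    _ = T.card * d / n + 1 := by rw [hdiv]
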